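/- If c ≠ 0, then the 𝒟-module 𝒜_{a,b,c} is irreducible for all a, b ∈ ℂ. -/

import Mathlib

/-- The action of the Witt-algebra generator `d_m` on the module
`𝒜_{a,b} = ⊕_{i∈ℤ} ℂ vᵢ` (encoded as `ℤ →₀ ℂ`, with `vᵢ = single i 1`):
`d_m · vᵢ = (a + i + b m) v_{m+i}`, extended linearly. -/
noncomputable def dAct (a b : ℂ) (m : ℤ) (v : ℤ →₀ ℂ) : ℤ →₀ ℂ :=
  v.sum fun i c => Finsupp.single (m + i) ((a + (i : ℂ) + b * (m : ℂ)) * c)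

/-- The action of the generator `Y_n` of the twisted Heisenberg–Virasoro algebra `𝒟`
on `𝒜_{a,b,c}`: `Y_n · vᵢ = c v_{n+i}`, extended linearly. -/
noncomputable def yAct (c : ℂ) (n : ℤ) (v : ℤ →₀ ℂ) : ℤ →₀ ℂ :=
  v.sum fun i co => Finsupp.single (n + i) (c * co)

lemma dAct_zero_apply (a b : ℂ) (v : ℤ →₀ ℂ) (k : ℤ) :
    dAct a b 0 v k = (a + (k : ℂ)) * v k := by
  unfold dAct
  rw [Finsupp.sum_apply, Finsupp.sum]
  simp only [Int.cast_zero, mul_zero, add_zero, zero_add, Finsupp.single_apply]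
  rw [Finset.sum_ite_eq' v.support k (fun i => (a + (i : ℂ)) * v i)]
  by_cases h : k ∈ v.support
  · simp [h]
  · simp [h, Finsupp.notMem_support_iff.mp h]

lemma yAct_single (c : ℂ) (n i : ℤ) :
    yAct c n (Finsupp.single i (1 : ℂ)) = Finsupp.single (n + i) c := by
  unfold yAct
  rw [Finsupp.sum_single_index (by simp)]
  simp

/-- Key step: any invariant subspace containing a nonzero vector contains some
`single i 1`. Induction on the support size. -/
lemma exists_single_mem (a b : ℂ) (U : Submodule ℂ (ℤ →₀ ℂ))
    (hd : ∀ v ∈ U, dAct a b 0 v ∈ U) :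
    ∀ n : ℕ, ∀ v ∈ U, v ≠ 0 → v.support.card ≤ n →
      ∃ i : ℤ, Finsupp.single i (1 : ℂ) ∈ U := by
  intro n
  induction n with
  | zero =>
    intro v _ hv hcard
    exact absurd (Finsupp.support_eq_empty.mp (Finset.card_eq_zero.mp (Nat.le_zero.mp hcard)))
      hv
  | succ n ih =>
    intro v hvU hv hcard
    by_cases h1 : 1 < v.support.card
    · -- two distinct support elements; kill one with the diagonal operator
      obtain ⟨i, hi, j, hj, hij⟩ := Finset.one_lt_card.mp h1
      set w : ℤ →₀ ℂ := dAct a b 0 v - (a + (j : ℂ)) • v with hw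
      have hwU : w ∈ U := U.sub_mem (hd v hvU) (U.smul_mem _ hvU)
      have hwapp : ∀ k : ℤ, w k = ((k : ℂ) - (j : ℂ)) * v k := by
        intro k
        simp [hw, dAct_zero_apply]
        ring
      have hwi : w i ≠ 0 := by
        rw [hwapp]
        refine mul_ne_zero ?_ (Finsupp.mem_support_iff.mp hi)
        rw [sub_ne_zero]
        exact_mod_cast hij
      have hwne : w ≠ 0 := fun h => hwi (by rw [h]; rfl)
      have hsub : w.support ⊆ v.support.erase j := by
        intro k hk
        rw [Finsupp.mem_support_iff, hwapp] at hk
        rcases mul_ne_zero_iff.mp hk with ⟨hk1, hk2⟩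
        refine Finset.mem_erase.mpr ⟨?_, Finsupp.mem_support_iff.mpr hk2⟩
        intro hkj
        exact hk1 (by rw [hkj]; ring)
      have hwcard : w.support.card ≤ n := by
        calc w.support.card ≤ (v.support.erase j).card := Finset.card_le_card hsub
          _ = v.support.card - 1 := Finset.card_erase_of_mem hj
          _ ≤ n := by omega
      exact ih w hwU hwne hwcard
    · -- support is a singleton
      have hne : v.support.card ≠ 0 := fun h =>
        hv (Finsupp.support_eq_empty.mp (Finset.card_eq_zero.mp h))
      have h1' : v.support.card = 1 := by omega
      obtain ⟨i, x, hx, hvx⟩ := Finsupp.card_support_eq_one'.mp h1'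
      refine ⟨i, ?_⟩
      have : x⁻¹ • v ∈ U := U.smul_mem _ hvU
      rwa [hvx, Finsupp.smul_single, smul_eq_mul, inv_mul_cancel₀ hx] at this

/-- if `c ≠ 0`, the `𝒟`-module `𝒜_{a,b,c}` is irreducible for all
`a, b ∈ ℂ`: every subspace invariant under all `d_m` and `Y_n` is `⊥` or `⊤`. -/
theorem Aabc_irreducible (a b c : ℂ) (hc : c ≠ 0) :
    ∀ U : Submodule ℂ (ℤ →₀ ℂ),
      ((∀ m : ℤ, ∀ v ∈ U, dAct a b m v ∈ U) ∧ (∀ n : ℤ, ∀ v ∈ U, yAct c n v ∈ U)) →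
      U = ⊥ ∨ U = ⊤ := by
  rintro U ⟨hd, hy⟩
  by_cases hbot : U = ⊥
  · exact Or.inl hbot
  right
  obtain ⟨v, hvU, hv⟩ := Submodule.exists_mem_ne_zero_of_ne_bot hbot
  obtain ⟨i, hi⟩ := exists_single_mem a b U (hd 0) v.support.card v hvU hv le_rfl
  -- all basis vectors lie in U
  have hall : ∀ j : ℤ, Finsupp.single j (1 : ℂ) ∈ U := by
    intro j
    have h1 : yAct c (j - i) (Finsupp.single i (1 : ℂ)) ∈ U := hy _ _ hi
    rw [yAct_single, sub_add_cancel] at h1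
    have h2 : c⁻¹ • Finsupp.single j c ∈ U := U.smul_mem _ h1
    rwa [Finsupp.smul_single, smul_eq_mul, inv_mul_cancel₀ hc] at h2
  rw [Submodule.eq_top_iff']
  intro x
  induction x using Finsupp.induction with
  | zero => exact U.zero_mem
  | single_add j y f _ _ ihf =>
    refine U.add_mem ?_ ihf
    have := U.smul_mem y (hall j)
    rwa [Finsupp.smul_single, smul_eq_mul, mul_one] at this
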